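/- arXiv:math/9804123 — 2 statements merged into one kernel-verified Lean document; each statement's English description precedes it below -/
import Mathlib

section
/- Let 𝒟 be a triangulated category equipped with a t-structure (𝒟^{≤0}, 𝒟^{≥0}). Then every object M of 𝒟 of bounded cohomological amplitude (i.e., lying in 𝒟^{≥a} ∩ 𝒟^{≤b} for some integers a ≤ b) has the property that every projector p : M → M with p ∘ p = p splits: there exist an object I and morphisms π : M → I, ι : I → M with ι ∘ π = p and π ∘ ι = id_I. In particular, the full subcategory of cohomologically bounded objects of 𝒟 is pseudoabelian. (Lemma 2.14.) -/
open CategoryTheory CategoryTheory.Limits CategoryTheory.Pretriangulated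
  CategoryTheory.Triangulated

open CategoryTheory.Category CategoryTheory.Preadditive

section Aux

variable {𝒟 : Type*} [Category 𝒟] [Preadditive 𝒟] [HasZeroObject 𝒟]
  [HasShift 𝒟 ℤ] [∀ n : ℤ, (shiftFunctor 𝒟 n).Additive] [Pretriangulated 𝒟]
  (t : TStructure 𝒟)

/-- Orthogonality: `Hom(X, Y) = 0` when `X` is `≤ m`, `Y` is `≥ n` and `m < n`. -/
lemma tstr_hom_zero {X Y : 𝒟} {m n : ℤ} (hmn : m < n)
    (hX : t.le m X) (hY : t.ge n Y) (f : X ⟶ Y) : f = 0 := by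
  have hX' : t.le 0 (X⟦m⟧) := t.le_shift m m 0 (by omega) X hX
  have hY' : t.ge (n - m) (Y⟦m⟧) := t.ge_shift n m (n - m) (by omega) Y hY
  have hY'' : t.ge 1 (Y⟦m⟧) := t.ge_antitone (show (1:ℤ) ≤ n - m by omega) _ hY'
  have h0 : (shiftFunctor 𝒟 m).map f = 0 := t.zero' _ hX' hY''
  apply (shiftFunctor 𝒟 m).map_injective
  rw [h0, Functor.map_zero]

/-- `GE a` is closed under extensions. -/
lemma tstr_ge_ext {T : Triangle 𝒟} (hT : T ∈ distTriang 𝒟) {a : ℤ}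
    (h1 : t.ge a T.obj₁) (h3 : t.ge a T.obj₃) : t.ge a T.obj₂ := by
  obtain ⟨A, B, hA, hB, u, v, w, mem⟩ := t.exists_triangle T.obj₂ (a - 1) a (by omega)
  have hu2 : u ≫ T.mor₂ = 0 := tstr_hom_zero t (by omega) hA h3 _
  obtain ⟨g, hg⟩ := Triangle.coyoneda_exact₂ T hT u hu2
  have hg0 : g = 0 := tstr_hom_zero t (by omega) hA h1 g
  have hu : u = 0 := by rw [hg, hg0, zero_comp]
  have hAzero : IsZero A := by
    rw [IsZero.iff_id_eq_zero]
    obtain ⟨m, hm⟩ := Triangle.coyoneda_exact₂ _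
      (inv_rot_of_distTriang _ mem) (𝟙 A) (show 𝟙 A ≫ u = 0 by rw [id_comp, hu])
    have hBm : t.ge (a + 1) (B⟦(-1:ℤ)⟧) := t.ge_shift a (-1) (a + 1) (by omega) B hB
    have hm0 : m = 0 := tstr_hom_zero t (show a - 1 < a + 1 by omega) hA hBm m
    rw [hm, hm0]; exact zero_comp
  haveI : IsIso v := (Triangle.isZero₁_iff_isIso₂ _ mem).1 hAzero
  exact (t.ge a).prop_of_iso (asIso v).symm hB

/-- `LE b` is closed under extensions. -/
lemma tstr_le_ext {T : Triangle 𝒟} (hT : T ∈ distTriang 𝒟) {b : ℤ}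
    (h1 : t.le b T.obj₁) (h3 : t.le b T.obj₃) : t.le b T.obj₂ := by
  obtain ⟨A, B, hA, hB, u, v, w, mem⟩ := t.exists_triangle T.obj₂ b (b + 1) rfl
  have hv1 : T.mor₁ ≫ v = 0 := tstr_hom_zero t (by omega) h1 hB _
  obtain ⟨g, hg⟩ := Triangle.yoneda_exact₂ T hT v hv1
  have hg0 : g = 0 := tstr_hom_zero t (by omega) h3 hB g
  have hv : v = 0 := by rw [hg, hg0, comp_zero]
  have hBzero : IsZero B := by
    rw [IsZero.iff_id_eq_zero]
    obtain ⟨m, hm⟩ := Triangle.yoneda_exact₃ _ mem (𝟙 B) (show v ≫ 𝟙 B = 0 by rw [comp_id, hv])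
    have hAm : t.le (b - 1) (A⟦(1:ℤ)⟧) := t.le_shift b 1 (b - 1) (by omega) A hA
    have hm0 : m = 0 := tstr_hom_zero t (show b - 1 < b + 1 by omega) hAm hB m
    rw [hm, hm0]; exact comp_zero
  haveI : IsIso u := (Triangle.isZero₃_iff_isIso₁ _ mem).1 hBzero
  exact (t.le b).prop_of_iso (asIso u) hA

/-- Base case: a projector on an object of amplitude `0` splits. -/
lemma tstr_split_amp_zero {a : ℤ} {X : 𝒟} (hge : t.ge a X) (hle : t.le a X)
    (p : X ⟶ X) (hp : p ≫ p = p) :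
    ∃ (I : 𝒟) (π : X ⟶ I) (ι : I ⟶ X), π ≫ ι = p ∧ ι ≫ π = 𝟙 I := by
  obtain ⟨C, g, h, mem⟩ := distinguished_cocone_triangle (𝟙 X - p)
  obtain ⟨j, hj⟩ := Triangle.yoneda_exact₂ _ mem p
    (show (𝟙 X - p) ≫ p = 0 by rw [sub_comp, id_comp, hp, sub_self])
  dsimp only [Triangle.mk] at j hj
  have hj' : g ≫ j = p := hj.symm
  have hpg : p ≫ g = g := by
    have h0 : (𝟙 X - p) ≫ g = 0 := comp_distTriang_mor_zero₁₂ _ mem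
    rw [sub_comp, id_comp, sub_eq_zero] at h0
    exact h0.symm
  obtain ⟨k, hk⟩ := Triangle.yoneda_exact₃ _ mem (j ≫ g - 𝟙 C)
    (show g ≫ (j ≫ g - 𝟙 C) = 0 by
      rw [comp_sub, comp_id, ← assoc, hj', hpg, sub_self])
  dsimp only [Triangle.mk] at k hk
  obtain ⟨A', B', hA', hB', u', v', w', mem'⟩ := t.exists_triangle C (a - 1) a (by omega)
  obtain ⟨ι, hι⟩ := Triangle.yoneda_exact₂ _ mem' j
    (show u' ≫ j = 0 from tstr_hom_zero t (show a - 1 < a by omega) hA' hge _)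
  dsimp only [Triangle.mk] at ι hι
  have hι' : v' ≫ ι = j := hι.symm
  refine ⟨B', g ≫ v', ι, ?_, ?_⟩
  · rw [assoc, hι', hj']
  · have hkv : k ≫ v' = 0 := tstr_hom_zero t (show a - 1 < a by omega)
      (t.le_shift a 1 (a - 1) (by omega) X hle) hB' _
    have hjg : j ≫ g = 𝟙 C + h ≫ k := by
      rw [← sub_eq_iff_eq_add']
      exact hk
    have key : v' ≫ (ι ≫ g ≫ v') = v' := by
      rw [← assoc, ← assoc, hι', assoc, ← assoc, hjg, add_comp, id_comp, assoc, hkv,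
        comp_zero, add_zero]
    have hz : v' ≫ (ι ≫ g ≫ v' - 𝟙 B') = 0 := by rw [comp_sub, key, comp_id, sub_self]
    obtain ⟨m, hm⟩ := Triangle.yoneda_exact₃ _ mem' _ hz
    dsimp only [Triangle.mk] at m hm
    have hm0 : m = 0 := tstr_hom_zero t (show a - 2 < a by omega)
      (t.le_shift (a - 1) 1 (a - 2) (by omega) A' hA') hB' m
    rw [hm0, comp_zero, sub_eq_zero] at hm
    exact hm

/-- For unipotent endomorphisms: `(𝟙 - z) ≫ (𝟙 + z) = 𝟙` and conversely when `z ≫ z = 0`. -/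
lemma tstr_unip {W : 𝒟} (z : W ⟶ W) (hz : z ≫ z = 0) :
    (𝟙 W - z) ≫ (𝟙 W + z) = 𝟙 W ∧ (𝟙 W + z) ≫ (𝟙 W - z) = 𝟙 W := by
  constructor
  · simp only [sub_comp, comp_add, id_comp, comp_id, hz]
    abel
  · simp only [add_comp, comp_sub, id_comp, comp_id, hz]
    abel

/-- Two idempotents whose difference squares to zero are conjugate. -/
lemma tstr_idem_conj {W : 𝒟} (p d : W ⟶ W) (hp : p ≫ p = p)
    (hv : (p + d) ≫ (p + d) = p + d) (hdd : d ≫ d = 0) :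
    ∃ c c' : W ⟶ W, c ≫ c' = 𝟙 W ∧ c' ≫ c = 𝟙 W ∧ c ≫ p = (p + d) ≫ c := by
  have star : p ≫ d + d ≫ p = d := by
    have h0' : p + (p ≫ d + d ≫ p) = p + d := by
      calc p + (p ≫ d + d ≫ p) = (p + d) ≫ (p + d) := by
            simp only [add_comp, comp_add, hp, hdd, add_zero]
            abel
        _ = p + d := hv
    exact add_left_cancel h0'
  have hpd' : p ≫ d = d - d ≫ p := by
    rw [eq_sub_iff_add_eq, star]
  have hpdp : p ≫ d ≫ p = 0 := by
    rw [← assoc, hpd', sub_comp, assoc, hp, sub_self]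
  have hdpd : d ≫ p ≫ d = 0 := by
    rw [hpd', comp_sub, hdd, ← assoc, hdd, zero_comp, sub_self]
  have hz2 : (d ≫ p - p ≫ d) ≫ (d ≫ p - p ≫ d) = 0 := by
    have e1 : (d ≫ p) ≫ d ≫ p = 0 := by rw [assoc d p (d ≫ p), hpdp, comp_zero]
    have e2 : (d ≫ p) ≫ p ≫ d = 0 := by
      rw [assoc d p (p ≫ d), ← assoc p p d, hp]
      exact hdpd
    have e3 : (p ≫ d) ≫ d ≫ p = 0 := by
      rw [assoc p d (d ≫ p), ← assoc d d p, hdd, zero_comp, comp_zero]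
    have e4 : (p ≫ d) ≫ p ≫ d = 0 := by rw [assoc p d (p ≫ d), hdpd, comp_zero]
    rw [sub_comp, comp_sub, comp_sub, e1, e2, e3, e4]
    abel
  refine ⟨𝟙 W + (d ≫ p - p ≫ d), 𝟙 W - (d ≫ p - p ≫ d),
    (tstr_unip _ hz2).2, (tstr_unip _ hz2).1, ?_⟩
  have hLHS : (𝟙 W + (d ≫ p - p ≫ d)) ≫ p = p + d ≫ p := by
    rw [add_comp, id_comp, sub_comp, assoc d p p, hp, assoc p d p, hpdp, sub_zero]
  have hRHS : (p + d) ≫ (𝟙 W + (d ≫ p - p ≫ d)) = p + (d - p ≫ d) := by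
    rw [add_comp, comp_add, comp_add, comp_id, comp_id, comp_sub, comp_sub,
      hpdp, ← assoc p p d, hp, ← assoc d d p, hdd, zero_comp, hdpd]
    abel
  rw [hLHS, hRHS]
  have h' : d ≫ p = d - p ≫ d := by
    rw [eq_sub_iff_add_eq, add_comm, star]
  rw [h']

/-- Gluing step: a projector on the middle of a truncation triangle splits if its
restrictions to both ends split. -/
lemma tstr_split_glue {T : Triangle 𝒟} (hT : T ∈ distTriang 𝒟) {n : ℤ}
    (h1 : t.le n T.obj₁) (h3 : t.ge (n + 1) T.obj₃)
    (p : T.obj₂ ⟶ T.obj₂) (hp : p ≫ p = p)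
    (ih1 : ∀ q : T.obj₁ ⟶ T.obj₁, q ≫ q = q →
      ∃ (I : 𝒟) (π : T.obj₁ ⟶ I) (ι : I ⟶ T.obj₁), π ≫ ι = q ∧ ι ≫ π = 𝟙 I)
    (ih3 : ∀ q : T.obj₃ ⟶ T.obj₃, q ≫ q = q →
      ∃ (I : 𝒟) (π : T.obj₃ ⟶ I) (ι : I ⟶ T.obj₃), π ≫ ι = q ∧ ι ≫ π = 𝟙 I) :
    ∃ (I : 𝒟) (π : T.obj₂ ⟶ I) (ι : I ⟶ T.obj₂), π ≫ ι = p ∧ ι ≫ π = 𝟙 I := by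
  have hAB : ∀ φ : T.obj₁ ⟶ T.obj₃, φ = 0 :=
    fun φ => tstr_hom_zero t (show n < n + 1 by omega) h1 h3 φ
  have hA1B : ∀ φ : T.obj₁⟦(1:ℤ)⟧ ⟶ T.obj₃, φ = 0 :=
    fun φ => tstr_hom_zero t (show n - 1 < n + 1 by omega)
      (t.le_shift n 1 (n - 1) (by omega) _ h1) h3 φ
  have hABm : ∀ φ : T.obj₁ ⟶ T.obj₃⟦(-1:ℤ)⟧, φ = 0 :=
    fun φ => tstr_hom_zero t (show n < n + 2 by omega) h1
      (t.ge_shift (n + 1) (-1) (n + 2) (by omega) _ h3) φ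
  -- the projector descends to obj₁
  obtain ⟨pA, hpA⟩ := Triangle.coyoneda_exact₂ T hT (T.mor₁ ≫ p) (hAB _)
  -- injectivity lemmas
  have inj_f : ∀ d : T.obj₁ ⟶ T.obj₁, d ≫ T.mor₁ = 0 → d = 0 := by
    intro d hd
    obtain ⟨m, hm⟩ := Triangle.coyoneda_exact₂ _ (inv_rot_of_distTriang _ hT) d hd
    rw [hm, hABm m]; exact zero_comp
  have inj_g : ∀ d : T.obj₃ ⟶ T.obj₃, T.mor₂ ≫ d = 0 → d = 0 := by
    intro d hd
    obtain ⟨m, hm⟩ := Triangle.yoneda_exact₃ T hT d hd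
    rw [hm, hA1B m, comp_zero]
  have hpA2 : pA ≫ pA = pA := by
    have h' : pA ≫ pA - pA = 0 := inj_f _ (by
      rw [sub_comp, assoc, ← hpA, ← assoc, ← hpA, assoc, hp, hpA, sub_self])
    rw [sub_eq_zero] at h'
    exact h'
  -- the projector descends to obj₃, compatibly with mor₃
  obtain ⟨pB, hpB1, hpB3⟩ := complete_distinguished_triangle_morphism T T hT hT pA p hpA
  have hpB2 : pB ≫ pB = pB := by
    have h' : pB ≫ pB - pB = 0 := inj_g _ (by
      rw [comp_sub, ← assoc, hpB1, assoc, hpB1, ← assoc, hp, sub_self])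
    rw [sub_eq_zero] at h'
    exact h'
  -- split both ends
  obtain ⟨I, πA, ιA, hIA1, hIA2⟩ := ih1 pA hpA2
  obtain ⟨J, πB, ιB, hJ1, hJ2⟩ := ih3 pB hpB2
  have hpAπ : pA ≫ πA = πA := by rw [← hIA1, assoc, hIA2, comp_id]
  have hιpB : ιB ≫ pB = ιB := by rw [← hJ1, ← assoc, hJ2, id_comp]
  have hI1J : ∀ m : I⟦(1:ℤ)⟧ ⟶ J, m = 0 := by
    intro m
    have hm : m = ιA⟦(1:ℤ)⟧' ≫ (πA⟦(1:ℤ)⟧' ≫ m ≫ ιB) ≫ πB := by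
      simp only [assoc, hJ2, comp_id, ← Functor.map_comp_assoc, hIA2]
      rw [CategoryTheory.Functor.map_id, id_comp]
    rw [hm, hA1B (πA⟦(1:ℤ)⟧' ≫ m ≫ ιB), zero_comp, comp_zero]
  -- glue the images
  obtain ⟨K, fI, gI, memK⟩ := distinguished_cocone_triangle₂ (ιB ≫ T.mor₃ ≫ πA⟦(1:ℤ)⟧')
  -- φ : obj₂ → K
  obtain ⟨φ, hφ1, hφ2⟩ := complete_distinguished_triangle_morphism₂ T
    (Triangle.mk fI gI (ιB ≫ T.mor₃ ≫ πA⟦(1:ℤ)⟧')) hT memK πA πB (by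
      show T.mor₃ ≫ πA⟦(1:ℤ)⟧' = πB ≫ (ιB ≫ T.mor₃ ≫ πA⟦(1:ℤ)⟧')
      rw [← assoc, hJ1, ← assoc, ← hpB3, assoc, ← Functor.map_comp, hpAπ])
  -- ψ : K → obj₂
  obtain ⟨ψ, hψ1, hψ2⟩ := complete_distinguished_triangle_morphism₂
    (Triangle.mk fI gI (ιB ≫ T.mor₃ ≫ πA⟦(1:ℤ)⟧')) T memK hT ιA ιB (by
      show (ιB ≫ T.mor₃ ≫ πA⟦(1:ℤ)⟧') ≫ ιA⟦(1:ℤ)⟧' = ιB ≫ T.mor₃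
      rw [assoc, assoc, ← Functor.map_comp, hIA1, hpB3, ← assoc, hιpB])
  dsimp only [Triangle.mk] at φ ψ hφ1 hφ2 hψ1 hψ2
  -- hφ1 : T.mor₁ ≫ φ = πA ≫ fI ; hφ2 : T.mor₂ ≫ πB = φ ≫ gI
  -- hψ1 : fI ≫ ψ = ιA ≫ T.mor₁ ; hψ2 : gI ≫ ιB = ψ ≫ T.mor₂
  -- ψ ≫ φ is unipotent
  have hfu : fI ≫ (ψ ≫ φ) = fI := by
    rw [← assoc, hψ1, assoc, hφ1, ← assoc, hIA2, id_comp]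
  have hug : (ψ ≫ φ) ≫ gI = gI := by
    rw [assoc, ← hφ2, ← assoc, ← hψ2, assoc, hJ2, comp_id]
  set nn := ψ ≫ φ - 𝟙 K with hnn
  have hfn : fI ≫ nn = 0 := by rw [hnn, comp_sub, hfu, comp_id, sub_self]
  have hng : nn ≫ gI = 0 := by rw [hnn, sub_comp, hug, id_comp, sub_self]
  obtain ⟨k₀, hk₀⟩ := Triangle.yoneda_exact₂ _ memK nn hfn
  dsimp only [Triangle.mk] at k₀ hk₀
  have hk₀' : gI ≫ k₀ = nn := hk₀.symm
  have hk₀g : k₀ ≫ gI = 0 := by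
    obtain ⟨m, hm⟩ := Triangle.yoneda_exact₃ _ memK (k₀ ≫ gI)
      (show gI ≫ k₀ ≫ gI = 0 by rw [← assoc, hk₀', hng])
    dsimp only [Triangle.mk] at m hm
    rw [hm, hI1J m, comp_zero]
  have hnn2 : nn ≫ nn = 0 := by
    rw [← hk₀', assoc, ← assoc k₀ gI k₀, hk₀g, zero_comp, comp_zero]
  have huu : ψ ≫ φ = 𝟙 K + nn := by rw [hnn]; abel
  -- correct ψ
  set ψ₂ := (𝟙 K - nn) ≫ ψ with hψ₂def
  have hψ₂φ : ψ₂ ≫ φ = 𝟙 K := by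
    rw [hψ₂def, assoc, huu]
    exact (tstr_unip nn hnn2).1
  have hfψ₂ : fI ≫ ψ₂ = ιA ≫ T.mor₁ := by
    rw [hψ₂def, ← assoc, comp_sub, comp_id, hfn, sub_zero, hψ1]
  have hψ₂g : ψ₂ ≫ T.mor₂ = gI ≫ ιB := by
    rw [hψ₂def, assoc, ← hψ2, ← assoc, sub_comp, id_comp, hng, sub_zero]
  -- v := φ ≫ ψ₂ is an idempotent agreeing with p on the truncations
  have hv2 : (φ ≫ ψ₂) ≫ (φ ≫ ψ₂) = φ ≫ ψ₂ := by
    rw [assoc, ← assoc ψ₂ φ ψ₂, hψ₂φ, id_comp]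
  have hfv : T.mor₁ ≫ (φ ≫ ψ₂) = T.mor₁ ≫ p := by
    rw [← assoc, hφ1, assoc, hfψ₂, ← assoc, hIA1, ← hpA]
  have hvg : (φ ≫ ψ₂) ≫ T.mor₂ = p ≫ T.mor₂ := by
    rw [assoc, hψ₂g, ← assoc, ← hφ2, assoc, hJ1, hpB1]
  -- d := φ ≫ ψ₂ - p factors through both mor₂ and mor₁
  have hfd : T.mor₁ ≫ (φ ≫ ψ₂ - p) = 0 := by rw [comp_sub, hfv, sub_self]
  have hdg : (φ ≫ ψ₂ - p) ≫ T.mor₂ = 0 := by rw [sub_comp, hvg, sub_self]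
  obtain ⟨e', he'⟩ := Triangle.yoneda_exact₂ T hT (φ ≫ ψ₂ - p) hfd
  have he'g : e' ≫ T.mor₂ = 0 := by
    apply inj_g
    rw [← assoc, ← he', hdg]
  obtain ⟨w, hw⟩ := Triangle.coyoneda_exact₂ T hT e' he'g
  have hdfact : φ ≫ ψ₂ - p = T.mor₂ ≫ w ≫ T.mor₁ := by rw [he', hw]
  have hdd : (φ ≫ ψ₂ - p) ≫ (φ ≫ ψ₂ - p) = 0 := by
    rw [hdfact]
    simp only [assoc]
    rw [← assoc T.mor₁ T.mor₂ (w ≫ T.mor₁), comp_distTriang_mor_zero₁₂ _ hT,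
      zero_comp, comp_zero, comp_zero]
  -- conjugate the two idempotents
  have hveq : p + (φ ≫ ψ₂ - p) = φ ≫ ψ₂ := by abel
  obtain ⟨c, c', hcc', hc'c, hcp⟩ := tstr_idem_conj p (φ ≫ ψ₂ - p) hp
    (by rw [hveq]; exact hv2) hdd
  rw [hveq] at hcp
  refine ⟨K, c' ≫ φ, ψ₂ ≫ c, ?_, ?_⟩
  · rw [assoc, ← assoc φ ψ₂ c, ← hcp, ← assoc, hc'c, id_comp]
  · rw [assoc, ← assoc c c' φ, hcc', id_comp, hψ₂φ]

/-- The bounded induction. -/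
lemma tstr_split_bounded (N : ℕ) :
    ∀ (a b : ℤ), b - a ≤ (N : ℤ) → ∀ (M : 𝒟), t.ge a M → t.le b M →
    ∀ p : M ⟶ M, p ≫ p = p →
    ∃ (I : 𝒟) (π : M ⟶ I) (ι : I ⟶ M), π ≫ ι = p ∧ ι ≫ π = 𝟙 I := by
  induction N with
  | zero =>
    intro a b hab M hge hle p hp
    exact tstr_split_amp_zero t hge (t.le_monotone (show b ≤ a by omega) M hle) p hp
  | succ N IH =>
    intro a b hab M hge hle p hp
    by_cases hba : b - a ≤ (N : ℤ)
    · exact IH a b hba M hge hle p hp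
    · obtain ⟨A, B, hA, hB, f, g, h, mem⟩ := t.exists_triangle M a (a + 1) rfl
      have hBm : t.ge a (B⟦(-1:ℤ)⟧) :=
        t.ge_antitone (show a ≤ a + 2 by omega) _
          (t.ge_shift (a + 1) (-1) (a + 2) (by omega) B hB)
      have hAge : t.ge a A := tstr_ge_ext t (inv_rot_of_distTriang _ mem) hBm hge
      have hA1 : t.le b (A⟦(1:ℤ)⟧) := t.le_monotone (show a - 1 ≤ b by omega) _
        (t.le_shift a 1 (a - 1) (by omega) A hA)
      have hBle : t.le b B := tstr_le_ext t (rot_of_distTriang _ mem) hle hA1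
      exact tstr_split_glue t mem hA hB p hp
        (fun q hq => IH a a (by omega) A hAge hA q hq)
        (fun q hq => IH (a + 1) b (by omega) B hB hBle q hq)

end Aux

/-- Lemma 2.14: in a triangulated category equipped with a t-structure, every
projector on a cohomologically bounded object splits.  In particular the full
subcategory of cohomologically bounded objects is pseudoabelian. -/
theorem bounded_projector_splits
    (𝒟 : Type*) [Category 𝒟] [Preadditive 𝒟] [HasZeroObject 𝒟]
    [HasShift 𝒟 ℤ] [∀ n : ℤ, (shiftFunctor 𝒟 n).Additive]
    [Pretriangulated 𝒟] [IsTriangulated 𝒟]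
    (t : TStructure 𝒟)
    (M : 𝒟) (hbdd : ∃ a b : ℤ, a ≤ b ∧ t.ge a M ∧ t.le b M)
    (p : M ⟶ M) (hp : p ≫ p = p) :
    ∃ (I : 𝒟) (π : M ⟶ I) (ι : I ⟶ M), π ≫ ι = p ∧ ι ≫ π = 𝟙 I := by
  obtain ⟨a, b, hab, hge, hle⟩ := hbdd
  exact tstr_split_bounded t (b - a).toNat a b (by omega) M hge hle p hp
end

section
/- Decomposition mechanism: Let ℬ be an additive category, 𝒜 an abelian category in which every monomorphism and every epimorphism splits (semisimple), and F : 𝒜 → ℬ an additive fully faithful functor. Let A, A' be objects of 𝒜, B an object of ℬ, and let i_* : F(A) → B and i^* : B → F(A') be morphisms in ℬ. Let a : A → A' be the unique morphism of 𝒜 with F(a) = i^* ∘ i_*, and let V = Im a be its image in 𝒜. Then there exists a (not necessarily unique) projector β : B → B, β ∘ β = β, together with morphisms r : B → F(V) and s : F(V) → B such that s ∘ r = β and r ∘ s = id_{F(V)}; that is, F(Im a) is an image of the projector β in ℬ. (Lemma 4.15.) -/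
open CategoryTheory CategoryTheory.Limits

/-- Lemma 4.15 (decomposition mechanism): let `𝒜` be a semisimple abelian
category (every mono and every epi splits), `ℬ` an additive category, and
`F : 𝒜 ⥤ ℬ` an additive fully faithful functor.  Given `i_* : F(A) ⟶ B` and
`i^* : B ⟶ F(A')` in `ℬ`, and `a : A ⟶ A'` the (unique) morphism of `𝒜` with
`F(a) = i^* ∘ i_*`, there is a (not necessarily unique) projector
`β : B ⟶ B` whose image is `F(Im a)`: that is, there are `r : B ⟶ F(Im a)`
and `s : F(Im a) ⟶ B` with `s ∘ r = β` and `r ∘ s = id`. -/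
theorem decomposition_mechanism
    (𝒜 : Type*) [Category 𝒜] [Abelian 𝒜]
    (ℬ : Type*) [Category ℬ] [Preadditive ℬ] [HasFiniteBiproducts ℬ]
    (hmono : ∀ {X Y : 𝒜} (f : X ⟶ Y), Mono f → ∃ r : Y ⟶ X, f ≫ r = 𝟙 X)
    (hepi : ∀ {X Y : 𝒜} (f : X ⟶ Y), Epi f → ∃ s : Y ⟶ X, s ≫ f = 𝟙 Y)
    (F : 𝒜 ⥤ ℬ) [F.Additive] [F.Full] [F.Faithful]
    (A A' : 𝒜) (B : ℬ)
    (iStar : F.obj A ⟶ B) (iUpper : B ⟶ F.obj A')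
    (a : A ⟶ A') (ha : F.map a = iStar ≫ iUpper) :
    ∃ (β : B ⟶ B) (r : B ⟶ F.obj (image a)) (s : F.obj (image a) ⟶ B),
      β ≫ β = β ∧ r ≫ s = β ∧ s ≫ r = 𝟙 (F.obj (image a)) := by
  obtain ⟨s₀, hs₀⟩ := hepi (factorThruImage a) inferInstance
  obtain ⟨r₀, hr₀⟩ := hmono (image.ι a) inferInstance
  refine ⟨(iUpper ≫ F.map r₀) ≫ (F.map s₀ ≫ iStar),
    iUpper ≫ F.map r₀, F.map s₀ ≫ iStar, ?_, rfl, ?_⟩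
  · have h : (F.map s₀ ≫ iStar) ≫ iUpper ≫ F.map r₀ = 𝟙 (F.obj (image a)) := by
      have : s₀ ≫ a ≫ r₀ = 𝟙 (image a) := by
        have h2 : s₀ ≫ a ≫ r₀ = (s₀ ≫ factorThruImage a) ≫ image.ι a ≫ r₀ := by simp
        rw [h2, hs₀, Category.id_comp, hr₀]
      calc (F.map s₀ ≫ iStar) ≫ iUpper ≫ F.map r₀
          = F.map s₀ ≫ (iStar ≫ iUpper) ≫ F.map r₀ := by simp
        _ = F.map (s₀ ≫ a ≫ r₀) := by rw [← ha]; simp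
        _ = 𝟙 _ := by rw [this, F.map_id]
    rw [Category.assoc, ← Category.assoc (F.map s₀ ≫ iStar), h]
    simp
  · have : s₀ ≫ a ≫ r₀ = 𝟙 (image a) := by
      have h2 : s₀ ≫ a ≫ r₀ = (s₀ ≫ factorThruImage a) ≫ image.ι a ≫ r₀ := by simp
      rw [h2, hs₀, Category.id_comp, hr₀]
    calc (F.map s₀ ≫ iStar) ≫ iUpper ≫ F.map r₀
        = F.map s₀ ≫ (iStar ≫ iUpper) ≫ F.map r₀ := by simp
      _ = F.map (s₀ ≫ a ≫ r₀) := by rw [← ha]; simp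
      _ = 𝟙 _ := by rw [this, F.map_id]
end
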